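/- arXiv:2508.19582 — 2 statements merged into one kernel-verified Lean document; each statement's English description precedes it below -/
import Mathlib

section
/- For the bivariate polynomial q(x,y) = Σ_{j=0}^{d} x^j y^{d-j} and integers 0 ≤ a ≤ d, the capacity Cap_{(d-a, a)}(q) := inf_{x,y>0} q(x,y)/(x^{d-a} y^{a}) is at most min{ (a+1)^{a+1}/a^a , (d-a+1)^{d-a+1}/(d-a)^{d-a} } (with the convention 0^0 = 1). -/
private lemma cap_sum_eq (d : ℕ) (y : ℝ) :
    ∑ j ∈ Finset.range (d + 1), (y + 1) ^ j * y ^ (d - j)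
      = (y + 1) ^ (d + 1) - y ^ (d + 1) := by
  have h := geom_sum₂_mul (y + 1) y (d + 1)
  simp only [Nat.add_sub_cancel] at h
  have hx : (y + 1) - y = 1 := by ring
  rw [hx, mul_one] at h
  exact h

private lemma cap_sum_eq' (d : ℕ) (x : ℝ) :
    ∑ j ∈ Finset.range (d + 1), x ^ j * (x + 1) ^ (d - j)
      = (x + 1) ^ (d + 1) - x ^ (d + 1) := by
  have h := geom_sum₂_mul x (x + 1) (d + 1)
  simp only [Nat.add_sub_cancel] at h
  have hx : x - (x + 1) = -1 := by ring
  rw [hx, mul_neg_one] at h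
  linarith

private lemma cap_geom_le (d : ℕ) {δ : ℝ} (h0 : 0 ≤ δ) (h1 : δ ≤ 1) :
    ∑ j ∈ Finset.range (d + 1), δ ^ j ≤ 1 + d * δ := by
  induction d with
  | zero => simp
  | succ n ih =>
    rw [Finset.sum_range_succ]
    have hp : δ ^ (n + 1) ≤ δ := pow_le_of_le_one h0 h1 (Nat.succ_ne_zero n)
    push_cast
    nlinarith [ih]

private lemma cap_dδ_lt (d : ℕ) {ε : ℝ} (hε : 0 < ε) :
    (d : ℝ) * min 1 (ε / (d + 1)) < ε := by
  have hd1 : (0:ℝ) < (d : ℝ) + 1 := by positivity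
  have h2 : min 1 (ε / (d + 1)) ≤ ε / (d + 1) := min_le_right _ _
  have h3 : (d : ℝ) * min 1 (ε / (d + 1)) ≤ (d : ℝ) * (ε / (d + 1)) :=
    mul_le_mul_of_nonneg_left h2 (Nat.cast_nonneg d)
  have h4 : (d : ℝ) * (ε / (d + 1)) < ε := by
    rw [mul_div_assoc', div_lt_iff₀ hd1]
    nlinarith
  linarith

theorem capacity_bivariate_upper (d a : ℕ) (h : a ≤ d) :
    sInf {r : ℝ | ∃ x y : ℝ, 0 < x ∧ 0 < y ∧
        r = (∑ j ∈ Finset.range (d + 1), x ^ j * y ^ (d - j)) /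
            (x ^ (d - a) * y ^ a)} ≤
      min (((a : ℝ) + 1) ^ (a + 1) / (a : ℝ) ^ a)
        (((d : ℝ) - a + 1) ^ (d - a + 1) / ((d : ℝ) - a) ^ (d - a)) := by
  set S : Set ℝ := {r : ℝ | ∃ x y : ℝ, 0 < x ∧ 0 < y ∧
        r = (∑ j ∈ Finset.range (d + 1), x ^ j * y ^ (d - j)) /
            (x ^ (d - a) * y ^ a)} with hS
  have hbdd : BddBelow S := by
    refine ⟨0, fun r hr => ?_⟩
    obtain ⟨x, y, hx, hy, rfl⟩ := hr
    have hnum : (0:ℝ) ≤ ∑ j ∈ Finset.range (d + 1), x ^ j * y ^ (d - j) := by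
      apply Finset.sum_nonneg
      intro j _
      positivity
    positivity
  have hne : S.Nonempty := ⟨_, 1, 1, one_pos, one_pos, rfl⟩
  have hA : sInf S ≤ ((a : ℝ) + 1) ^ (a + 1) / (a : ℝ) ^ a := by
    rcases Nat.eq_zero_or_pos a with ha0 | hapos
    · have h1 : sInf S ≤ 1 := by
        rw [Real.sInf_le_iff hbdd hne]
        intro ε hε
        set δ : ℝ := min 1 (ε / (d + 1)) with hδ
        have hδpos : 0 < δ := lt_min one_pos (by positivity)
        have hδ1 : δ ≤ 1 := min_le_left _ _
        refine ⟨_, ⟨1, δ, one_pos, hδpos, rfl⟩, ?_⟩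
        have hsum : ∑ j ∈ Finset.range (d + 1), (1:ℝ) ^ j * δ ^ (d - j)
            = ∑ j ∈ Finset.range (d + 1), δ ^ j := by
          rw [← Finset.sum_range_reflect (fun j => δ ^ j) (d + 1)]
          simp [Nat.add_sub_cancel]
        rw [hsum, ha0]
        simp only [Nat.sub_zero, one_pow, pow_zero, mul_one, div_one]
        have hb := cap_geom_le d hδpos.le hδ1
        have hdδ : (d : ℝ) * δ < ε := cap_dδ_lt d hε
        linarith
      rw [ha0]
      norm_num
      exact h1
    · have ha : (0:ℝ) < (a : ℝ) := by exact_mod_cast hapos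
      apply csInf_le_of_le hbdd ⟨(a : ℝ) + 1, (a : ℝ), by positivity, ha, rfl⟩
      rw [cap_sum_eq d (a : ℝ)]
      have hden : (0:ℝ) < ((a : ℝ) + 1) ^ (d - a) * (a : ℝ) ^ a := by positivity
      have hden2 : (0:ℝ) < (a : ℝ) ^ a := by positivity
      rw [div_le_div_iff₀ hden hden2]
      have hexp : ((a : ℝ) + 1) ^ (a + 1) * (((a : ℝ) + 1) ^ (d - a) * (a : ℝ) ^ a)
          = ((a : ℝ) + 1) ^ (d + 1) * (a : ℝ) ^ a := by
        rw [← mul_assoc, ← pow_add]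
        congr 2
        omega
      rw [hexp]
      have h1 : (0:ℝ) ≤ (a : ℝ) ^ (d + 1) * (a : ℝ) ^ a := by positivity
      nlinarith
  have hB : sInf S ≤ ((d : ℝ) - a + 1) ^ (d - a + 1) / ((d : ℝ) - a) ^ (d - a) := by
    have hcast : (d : ℝ) - a = ((d - a : ℕ) : ℝ) := by
      rw [Nat.cast_sub h]
    rcases Nat.eq_zero_or_pos (d - a) with hb0 | hbpos
    · have h1 : sInf S ≤ 1 := by
        rw [Real.sInf_le_iff hbdd hne]
        intro ε hε
        set δ : ℝ := min 1 (ε / (d + 1)) with hδ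
        have hδpos : 0 < δ := lt_min one_pos (by positivity)
        have hδ1 : δ ≤ 1 := min_le_left _ _
        refine ⟨_, ⟨δ, 1, hδpos, one_pos, rfl⟩, ?_⟩
        have hsum : ∑ j ∈ Finset.range (d + 1), δ ^ j * (1:ℝ) ^ (d - j)
            = ∑ j ∈ Finset.range (d + 1), δ ^ j := by simp
        rw [hsum, hb0]
        simp only [pow_zero, one_pow, one_mul, div_one]
        have hgb := cap_geom_le d hδpos.le hδ1
        have hdδ : (d : ℝ) * δ < ε := cap_dδ_lt d hε
        linarith
      rw [hcast, hb0]
      norm_num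
      exact h1
    · have hbr : (0:ℝ) < ((d - a : ℕ) : ℝ) := by exact_mod_cast hbpos
      rw [hcast]
      apply csInf_le_of_le hbdd
        ⟨((d - a : ℕ) : ℝ), ((d - a : ℕ) : ℝ) + 1, hbr, by positivity, rfl⟩
      rw [cap_sum_eq' d ((d - a : ℕ) : ℝ)]
      have hden : (0:ℝ) < (((d - a : ℕ)) : ℝ) ^ (d - a) * (((d - a : ℕ) : ℝ) + 1) ^ a := by
        positivity
      have hden2 : (0:ℝ) < (((d - a : ℕ)) : ℝ) ^ (d - a) := by positivity
      rw [div_le_div_iff₀ hden hden2]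
      have hexp : (((d - a : ℕ) : ℝ) + 1) ^ (d - a + 1)
            * ((((d - a : ℕ)) : ℝ) ^ (d - a) * (((d - a : ℕ) : ℝ) + 1) ^ a)
          = (((d - a : ℕ) : ℝ) + 1) ^ (d + 1) * (((d - a : ℕ)) : ℝ) ^ (d - a) := by
        rw [mul_left_comm, ← pow_add, mul_comm ((((d - a : ℕ)) : ℝ) ^ (d - a))]
        congr 2
        omega
      rw [hexp]
      have h1 : (0:ℝ) ≤ (((d - a : ℕ)) : ℝ) ^ (d + 1) * (((d - a : ℕ)) : ℝ) ^ (d - a) := by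
        positivity
      nlinarith
  exact le_min hA hB
end

section
/- Let f : ℝ^k → ℝ be defined by f(y) = log V(e^{y₁}, …, e^{y_k}) where V(x) = Σ_μ c_μ x^μ is a polynomial with nonnegative coefficients, not identically zero, that is homogeneous of degree n (all exponent vectors μ satisfy |μ| = n). Then f is n-Lipschitz with respect to the Euclidean norm on ℝ^k. -/
open MvPolynomial

lemma coord_abs_le_norm {k : ℕ} (x : EuclideanSpace ℝ (Fin k)) (i : Fin k) :
    |x i| ≤ ‖x‖ := by
  rw [EuclideanSpace.norm_eq]
  have h1 : |x i| = Real.sqrt (‖x i‖ ^ 2) := by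
    rw [Real.sqrt_sq_eq_abs]; simp
  rw [h1]
  apply Real.sqrt_le_sqrt
  exact Finset.single_le_sum (f := fun j => ‖x j‖ ^ 2)
    (fun j _ => by positivity) (Finset.mem_univ i)

lemma eval_exp_eq {k : ℕ} (V : MvPolynomial (Fin k) ℝ) (y : Fin k → ℝ) :
    eval (fun i => Real.exp (y i)) V =
      ∑ d ∈ V.support, V.coeff d * Real.exp (∑ i ∈ d.support, (d i : ℝ) * y i) := by
  rw [eval_eq]
  refine Finset.sum_congr rfl fun d _ => ?_
  congr 1
  rw [Real.exp_sum]
  refine Finset.prod_congr rfl fun i _ => ?_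
  rw [← Real.exp_nat_mul]

lemma one_side {k n : ℕ} (V : MvPolynomial (Fin k) ℝ)
    (hV : ∀ μ, 0 ≤ V.coeff μ) (hV0 : V ≠ 0) (hhom : V.IsHomogeneous n)
    (y z : EuclideanSpace ℝ (Fin k)) :
    Real.log (eval (fun i => Real.exp (y i)) V) -
        Real.log (eval (fun i => Real.exp (z i)) V) ≤ n * ‖y - z‖ := by
  obtain ⟨d0, hd0⟩ := MvPolynomial.ne_zero_iff.mp hV0
  have hposterm : ∀ (w : Fin k → ℝ) (d : Fin k →₀ ℕ),
      0 ≤ V.coeff d * Real.exp (∑ i ∈ d.support, (d i : ℝ) * w i) :=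
    fun w d => mul_nonneg (hV d) (Real.exp_pos _).le
  have hpos : ∀ w : Fin k → ℝ, 0 < eval (fun i => Real.exp (w i)) V := by
    intro w
    rw [eval_exp_eq]
    apply Finset.sum_pos'
    · exact fun d _ => hposterm w d
    · exact ⟨d0, mem_support_iff.mpr hd0,
        mul_pos (lt_of_le_of_ne (hV d0) (Ne.symm hd0)) (Real.exp_pos _)⟩
  have key : eval (fun i => Real.exp (y i)) V ≤
      Real.exp ((n : ℝ) * ‖y - z‖) * eval (fun i => Real.exp (z i)) V := by
    rw [eval_exp_eq, eval_exp_eq, Finset.mul_sum]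
    refine Finset.sum_le_sum fun d hd => ?_
    rw [mul_comm (Real.exp _) _, mul_assoc]
    refine mul_le_mul_of_nonneg_left ?_ (hV d)
    rw [← Real.exp_add]
    apply Real.exp_le_exp.mpr
    have hdeg : (∑ i ∈ d.support, (d i : ℝ)) = (n : ℝ) := by
      have := hhom (mem_support_iff.mp hd)
      rw [← this]
      simp [Finsupp.weight_apply, Finsupp.sum]
    have step : ∑ i ∈ d.support, (d i : ℝ) * y i -
        ∑ i ∈ d.support, (d i : ℝ) * z i ≤ (n : ℝ) * ‖y - z‖ := by
      rw [← Finset.sum_sub_distrib]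
      calc ∑ i ∈ d.support, ((d i : ℝ) * y i - (d i : ℝ) * z i)
          ≤ ∑ i ∈ d.support, (d i : ℝ) * ‖y - z‖ := by
            refine Finset.sum_le_sum fun i _ => ?_
            rw [← mul_sub]
            calc (d i : ℝ) * (y i - z i) ≤ (d i : ℝ) * |y i - z i| :=
                  mul_le_mul_of_nonneg_left (le_abs_self _) (Nat.cast_nonneg _)
              _ ≤ (d i : ℝ) * ‖y - z‖ := by
                  refine mul_le_mul_of_nonneg_left ?_ (Nat.cast_nonneg _)
                  have := coord_abs_le_norm (y - z) i
                  simpa using this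
        _ = (n : ℝ) * ‖y - z‖ := by rw [← Finset.sum_mul, hdeg]
    linarith
  have hlog := Real.log_le_log (hpos y) key
  rw [Real.log_mul (Real.exp_pos _).ne' (hpos z).ne', Real.log_exp] at hlog
  linarith

theorem log_eval_exp_lipschitz {k n : ℕ} (V : MvPolynomial (Fin k) ℝ)
    (hV : ∀ μ, 0 ≤ V.coeff μ) (hV0 : V ≠ 0) (hhom : V.IsHomogeneous n) :
    ∀ y z : EuclideanSpace ℝ (Fin k),
      |Real.log (eval (fun i => Real.exp (y i)) V) -
          Real.log (eval (fun i => Real.exp (z i)) V)| ≤ n * ‖y - z‖ := by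
  intro y z
  rw [abs_sub_le_iff]
  constructor
  · exact one_side V hV hV0 hhom y z
  · have := one_side V hV hV0 hhom z y
    rwa [norm_sub_rev] at this
end
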